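/- Let a, b, c, d, e, f in K satisfy a^2+3*b^2+c^2+3*d^2 = 1 and e^2+3*f^2 = 1. Define the 4x4 matrices H1 with rows (a,3*b,c,3*d), (-b,a,-d,c), (-c,3*d,a,-3*b), (-d,-c,b,a) and U with rows (e,-3*f,0,0), (f,e,0,0), (0,0,e,-3*f), (0,0,f,e); set h = H1*U. Define the 3x3 matrix Phi with rows (a^2+3*b^2-c^2-3*d^2, -2*a*d+2*b*c, 2*a*c+6*b*d), (6*a*d+6*b*c, a^2-3*b^2+c^2-3*d^2, -6*a*b+6*c*d), (-2*a*c+6*b*d, 2*a*b+2*c*d, a^2-3*b^2-c^2+3*d^2). Then: (i) h^T * I4 * h = I4; (ii) Phi^T * diag(3,1,3) * Phi = diag(3,1,3); and for every 4x3 matrix M over K, writing Q0(N) = I3 * N^T * I4 * N: (iii) Q0(h*M) = Q0(M) and (iv) Phi * Q0(M*Phi) = Q0(M) * Phi. -/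
import Mathlib


open Matrix

lemma stmt15_aux1 {K : Type*} [CommRing K] {n m : Type*} [Fintype n] [Fintype m]
    (A D : Matrix n n K) (I : Matrix m m K) (h : Aᵀ * D * A = D)
    (M : Matrix n m K) : I * (A * M)ᵀ * D * (A * M) = I * Mᵀ * D * M := by
  rw [Matrix.transpose_mul]
  have e : I * (Mᵀ * Aᵀ) * D * (A * M) = I * Mᵀ * (Aᵀ * D * A) * M := by
    simp only [Matrix.mul_assoc]
  rw [e, h]

lemma stmt15_aux2 {K : Type*} [CommRing K] {n m : Type*} [Fintype n] [Fintype m]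
    (P I3 : Matrix m m K) (D : Matrix n n K) (h : P * I3 * Pᵀ = I3)
    (M : Matrix n m K) :
    P * (I3 * (M * P)ᵀ * D * (M * P)) = (I3 * Mᵀ * D * M) * P := by
  rw [Matrix.transpose_mul]
  have e : P * (I3 * (Pᵀ * Mᵀ) * D * (M * P)) = (P * I3 * Pᵀ) * (Mᵀ * (D * (M * P))) := by
    simp only [Matrix.mul_assoc]
  rw [e, h]
  simp only [Matrix.mul_assoc]

set_option maxHeartbeats 1000000 in
/-- Equivariance properties of the map `M ↦ Q0(M) = I3 * Mᵀ * I4 * M` under the short-root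
`GL₂`-subgroup action: `h = H1·U` preserves the form `I4`, `Phi` preserves `diag(3,1,3)`,
`Q0(h·M) = Q0(M)`, and `Phi · Q0(M·Phi) = Q0(M) · Phi`. -/
theorem stmt15 {K : Type*} [Field K] (hchar2 : (2 : K) ≠ 0) (hchar3 : (3 : K) ≠ 0)
    (a b c d e f : K)
    (hquat : a^2 + 3*b^2 + c^2 + 3*d^2 = 1) (hcirc : e^2 + 3*f^2 = 1)
    (H1 U hmat : Matrix (Fin 4) (Fin 4) K) (Phi : Matrix (Fin 3) (Fin 3) K)
    (hH1 : H1 = !![a, 3*b, c, 3*d; -b, a, -d, c; -c, 3*d, a, -3*b; -d, -c, b, a])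
    (hU : U = !![e, -3*f, 0, 0; f, e, 0, 0; 0, 0, e, -3*f; 0, 0, f, e])
    (hhmat : hmat = H1 * U)
    (hPhi : Phi = !![a^2 + 3*b^2 - c^2 - 3*d^2, -2*a*d + 2*b*c, 2*a*c + 6*b*d;
                     6*a*d + 6*b*c, a^2 - 3*b^2 + c^2 - 3*d^2, -6*a*b + 6*c*d;
                     -2*a*c + 6*b*d, 2*a*b + 2*c*d, a^2 - 3*b^2 - c^2 + 3*d^2]) :
    hmatᵀ * (Matrix.diagonal ![1, 3, 1, 3] : Matrix (Fin 4) (Fin 4) K) * hmat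
        = Matrix.diagonal ![1, 3, 1, 3] ∧
    Phiᵀ * (Matrix.diagonal ![3, 1, 3] : Matrix (Fin 3) (Fin 3) K) * Phi
        = Matrix.diagonal ![3, 1, 3] ∧
    (∀ M : Matrix (Fin 4) (Fin 3) K,
      (Matrix.diagonal ![1, 3, 1] : Matrix (Fin 3) (Fin 3) K) * (hmat * M)ᵀ *
          (Matrix.diagonal ![1, 3, 1, 3] : Matrix (Fin 4) (Fin 4) K) * (hmat * M)
        = (Matrix.diagonal ![1, 3, 1] : Matrix (Fin 3) (Fin 3) K) * Mᵀ *
          (Matrix.diagonal ![1, 3, 1, 3] : Matrix (Fin 4) (Fin 4) K) * M) ∧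
    (∀ M : Matrix (Fin 4) (Fin 3) K,
      Phi * ((Matrix.diagonal ![1, 3, 1] : Matrix (Fin 3) (Fin 3) K) * (M * Phi)ᵀ *
          (Matrix.diagonal ![1, 3, 1, 3] : Matrix (Fin 4) (Fin 4) K) * (M * Phi))
        = ((Matrix.diagonal ![1, 3, 1] : Matrix (Fin 3) (Fin 3) K) * Mᵀ *
          (Matrix.diagonal ![1, 3, 1, 3] : Matrix (Fin 4) (Fin 4) K) * M) * Phi) := by
  have L1 : hmatᵀ * (Matrix.diagonal ![1, 3, 1, 3] : Matrix (Fin 4) (Fin 4) K) * hmat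
      = Matrix.diagonal ![1, 3, 1, 3] := by
    subst hH1 hU hhmat
    ext i j
    fin_cases i <;> fin_cases j <;>
      simp [Matrix.mul_apply, Matrix.diagonal_apply, Matrix.transpose_apply,
        Matrix.vecMul_diagonal, Matrix.mul_diagonal, Matrix.diagonal_mul,
        Fin.sum_univ_four, Matrix.vecHead, Matrix.vecTail] <;>
      first
        | ring1
        | linear_combination (a^2+3*b^2+c^2+3*d^2)*hcirc + hquat
        | linear_combination 3*(a^2+3*b^2+c^2+3*d^2)*hcirc + 3*hquat
  have L2 : Phiᵀ * (Matrix.diagonal ![3, 1, 3] : Matrix (Fin 3) (Fin 3) K) * Phi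
      = Matrix.diagonal ![3, 1, 3] := by
    subst hPhi
    ext i j
    fin_cases i <;> fin_cases j <;>
      simp [Matrix.mul_apply, Matrix.diagonal_apply, Matrix.transpose_apply,
        Matrix.vecMul_diagonal, Matrix.mul_diagonal, Matrix.diagonal_mul,
        Fin.sum_univ_three, Matrix.vecHead, Matrix.vecTail] <;>
      first
        | ring1
        | linear_combination (a^2+3*b^2+c^2+3*d^2+1)*hquat
        | linear_combination 3*(a^2+3*b^2+c^2+3*d^2+1)*hquat
  have L3 : Phi * (Matrix.diagonal ![1, 3, 1] : Matrix (Fin 3) (Fin 3) K) * Phiᵀ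
      = Matrix.diagonal ![1, 3, 1] := by
    subst hPhi
    ext i j
    fin_cases i <;> fin_cases j <;>
      simp [Matrix.mul_apply, Matrix.diagonal_apply, Matrix.transpose_apply,
        Matrix.vecMul_diagonal, Matrix.mul_diagonal, Matrix.diagonal_mul,
        Fin.sum_univ_three, Matrix.vecHead, Matrix.vecTail] <;>
      first
        | ring1
        | linear_combination (a^2+3*b^2+c^2+3*d^2+1)*hquat
        | linear_combination 3*(a^2+3*b^2+c^2+3*d^2+1)*hquat
  exact ⟨L1, L2, fun M => stmt15_aux1 _ _ _ L1 M, fun M => stmt15_aux2 _ _ _ L3 M⟩
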